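/- Let i ≥ 1 and r ≥ 0 be integers with 1 + (r+1)(q−1) < i·(q−1). Then Σ_{a∈A_{+,i}} a(t) · a^{q^{r+1}−1} = 0 in the polynomial ring F_q[θ][t]. (This is the vanishing statement established in the proof of the paper's Lemma 1.1 that the series Z_k define entire functions, specialized to genus zero, where dim_{F_q} A(<i) = i.) -/

import Mathlib

/-!
Genus-zero setting: `Fq` the finite field with `q = Fintype.card Fq` elements,
`A = Fq[θ] = Polynomial Fq`.  `t` is a second indeterminate: the polynomial ring
`Fq[θ][t]` is `Polynomial (Polynomial Fq)` (outer variable `t`), and for `a ∈ A`,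
`a(t)` is `a` with `θ` replaced by `t`, i.e. `a.map Polynomial.C` regarded in
`Fq[θ][t]` (a polynomial in `t` with constant coefficients), while `a` itself
embeds as the constant `Polynomial.C a`.
-/

open Polynomial

/-- The monic polynomial `θ^d + Σ_i c i • θ^i` of degree `d`; as `c` ranges over
all tuples this enumerates the set `A_{+,d}` of monic polynomials of degree `d`. -/
noncomputable def monicOf (Fq : Type) [Field Fq] (d : ℕ) (c : Fin d → Fq) : Polynomial Fq :=
  Polynomial.X ^ d + ∑ i : Fin d, Polynomial.C (c i) * Polynomial.X ^ (i : ℕ)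

open Finset in

-- Lemma A
lemma aux_sum_prod_pow (Fq : Type) [Field Fq] [Fintype Fq] (n : ℕ) (d : Fin n → ℕ)
    (hd : ∑ j, d j < n * (Fintype.card Fq - 1)) :
    ∑ c : Fin n → Fq, ∏ j, c j ^ d j = 0 := by
  classical
  obtain ⟨j0, hj0⟩ : ∃ j, d j < Fintype.card Fq - 1 := by
    by_contra hc
    push_neg at hc
    have : n * (Fintype.card Fq - 1) ≤ ∑ j, d j := by
      calc n * (Fintype.card Fq - 1) = ∑ _j : Fin n, (Fintype.card Fq - 1) := by
            simp [Finset.sum_const, mul_comm]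
        _ ≤ ∑ j, d j := Finset.sum_le_sum fun j _ => hc j
    omega
  have key : (∏ j : Fin n, ∑ x : Fq, x ^ d j) = 0 :=
    Finset.prod_eq_zero (Finset.mem_univ j0)
      (FiniteField.sum_pow_lt_card_sub_one Fq (d j0) hj0)
  rw [Finset.prod_univ_sum] at key
  rw [← key]
  rw [Fintype.piFinset_univ]

-- Lemma B
lemma aux_sum_eval (Fq : Type) [Field Fq] [Fintype Fq] (R : Type) [CommRing R] [Algebra Fq R] (n : ℕ)
    (P : MvPolynomial (Fin n) R) (hP : P.totalDegree < n * (Fintype.card Fq - 1)) :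
    ∑ c : Fin n → Fq, MvPolynomial.eval (fun j => algebraMap Fq R (c j)) P = 0 := by
  classical
  simp_rw [MvPolynomial.eval_eq']
  rw [Finset.sum_comm]
  refine Finset.sum_eq_zero fun d hd => ?_
  have hdeg : ∑ j, d j < n * (Fintype.card Fq - 1) := by
    refine lt_of_le_of_lt ?_ hP
    have := MvPolynomial.le_totalDegree hd
    rwa [Finsupp.sum_fintype _ _ (fun _ => rfl)] at this
  calc ∑ c : Fin n → Fq, MvPolynomial.coeff d P * ∏ j, (algebraMap Fq R (c j)) ^ d j
      = MvPolynomial.coeff d P * algebraMap Fq R (∑ c : Fin n → Fq, ∏ j, c j ^ d j) := by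
        rw [map_sum, Finset.mul_sum]
        refine Finset.sum_congr rfl fun c _ => ?_
        rw [map_prod]
        simp [map_pow]
    _ = 0 := by rw [aux_sum_prod_pow Fq n d hdeg, map_zero, mul_zero]

lemma geom_aux (q n : ℕ) (hq : 1 ≤ q) : ∑ s ∈ Finset.range n, (q - 1) * q ^ s = q ^ n - 1 := by
  induction n with
  | zero => simp
  | succ n ih =>
      rw [Finset.sum_range_succ, ih, Nat.sub_mul, one_mul, pow_succ]
      have h1 : 1 ≤ q ^ n := Nat.one_le_pow _ _ hq
      have h2 : q ^ n ≤ q ^ n * q := Nat.le_mul_of_pos_right _ (by omega)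
      have h3 : q * q ^ n = q ^ n * q := mul_comm _ _
      omega

lemma monic_pow_card (Fq : Type) [Field Fq] [Fintype Fq] (i : ℕ) (c : Fin i → Fq) (s : ℕ) :
    monicOf Fq i c ^ (Fintype.card Fq ^ s) =
      Polynomial.X ^ (i * Fintype.card Fq ^ s) +
        ∑ j : Fin i, Polynomial.C (c j) * Polynomial.X ^ ((j : ℕ) * Fintype.card Fq ^ s) := by
  classical
  set p := ringChar Fq with hp
  haveI : Fact p.Prime := ⟨CharP.char_is_prime Fq p⟩
  obtain ⟨k, -, hq⟩ := FiniteField.card Fq p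
  have hqs : Fintype.card Fq ^ s = p ^ ((k : ℕ) * s) := by rw [hq, ← pow_mul]
  rw [monicOf, hqs, add_pow_char_pow, sum_pow_char_pow]
  congr 1
  · rw [← pow_mul, ← hqs, mul_comm]
  · refine Finset.sum_congr rfl fun j _ => ?_
    rw [mul_pow, ← Polynomial.C_pow, ← pow_mul, ← hqs, FiniteField.pow_card_pow,
      mul_comm ((j : ℕ)) _ , mul_comm _ ((j:ℕ))]

/-- let `i ≥ 1` and `r ≥ 0` with `1 + (r+1)(q-1) < i(q-1)`.  Then
`Σ_{a ∈ A_{+,i}} a(t)·a^{q^{r+1} - 1} = 0` in `Fq[θ][t]`. -/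
theorem statement14 (Fq : Type) [Field Fq] [Fintype Fq] (i r : ℕ) (hi : 1 ≤ i)
    (h : 1 + (r + 1) * (Fintype.card Fq - 1) < i * (Fintype.card Fq - 1)) :
    ∑ c : Fin i → Fq,
      Polynomial.C (monicOf Fq i c ^ (Fintype.card Fq ^ (r + 1) - 1)) *
        (monicOf Fq i c).map (Polynomial.C : Fq →+* Polynomial Fq) = 0 := by
  classical
  set q := Fintype.card Fq with hqdef
  have hq2 : 2 ≤ q := Fintype.one_lt_card
  set at_mv : MvPolynomial (Fin i) (Polynomial (Polynomial Fq)) :=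
    MvPolynomial.C ((Polynomial.X : Polynomial (Polynomial Fq)) ^ i) +
      ∑ j : Fin i, MvPolynomial.X j *
        MvPolynomial.C ((Polynomial.X : Polynomial (Polynomial Fq)) ^ (j : ℕ)) with hat_mv
  set av : ℕ → MvPolynomial (Fin i) (Polynomial (Polynomial Fq)) := fun s =>
    MvPolynomial.C (Polynomial.C ((Polynomial.X : Polynomial Fq) ^ (i * q ^ s))) +
      ∑ j : Fin i, MvPolynomial.X j *
        MvPolynomial.C (Polynomial.C ((Polynomial.X : Polynomial Fq) ^ ((j : ℕ) * q ^ s)))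
    with hav_mv
  set P : MvPolynomial (Fin i) (Polynomial (Polynomial Fq)) :=
    at_mv * ∏ s ∈ Finset.range (r + 1), av s ^ (q - 1) with hP_def
  have halg : ∀ x : Fq,
      algebraMap Fq (Polynomial (Polynomial Fq)) x = Polynomial.C (Polynomial.C x) := by
    intro x
    rw [Polynomial.algebraMap_apply, Polynomial.algebraMap_apply]
    simp
  -- evaluation of the pieces
  have heval : ∀ c : Fin i → Fq,
      MvPolynomial.eval (fun j => algebraMap Fq (Polynomial (Polynomial Fq)) (c j)) P =
        Polynomial.C (monicOf Fq i c ^ (q ^ (r + 1) - 1)) *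
          (monicOf Fq i c).map (Polynomial.C : Fq →+* Polynomial Fq) := by
    intro c
    have e1 : MvPolynomial.eval (fun j => algebraMap Fq (Polynomial (Polynomial Fq)) (c j))
        at_mv = (monicOf Fq i c).map (Polynomial.C : Fq →+* Polynomial Fq) := by
      simp only [hat_mv, map_add, map_sum, map_mul, MvPolynomial.eval_C, MvPolynomial.eval_X,
        halg, monicOf, Polynomial.map_add, Polynomial.map_pow, Polynomial.map_X,
        Polynomial.map_sum, Polynomial.map_mul, Polynomial.map_C]
    have e2 : ∀ s, MvPolynomial.eval (fun j => algebraMap Fq (Polynomial (Polynomial Fq)) (c j))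
        (av s) = Polynomial.C (monicOf Fq i c ^ q ^ s) := by
      intro s
      have hrhs : Polynomial.C (monicOf Fq i c ^ q ^ s) =
          Polynomial.C ((Polynomial.X : Polynomial Fq) ^ (i * q ^ s)) +
            ∑ j : Fin i, Polynomial.C (Polynomial.C (c j)) *
              Polynomial.C ((Polynomial.X : Polynomial Fq) ^ ((j : ℕ) * q ^ s))
            := by
        rw [monic_pow_card, map_add, map_sum]
        simp_rw [map_mul]
        rfl
      rw [hrhs]
      simp only [hav_mv, map_add, map_sum, map_mul, MvPolynomial.eval_C, MvPolynomial.eval_X,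
        halg, map_pow]
    have e3 : ∏ s ∈ Finset.range (r + 1), (monicOf Fq i c ^ q ^ s) ^ (q - 1) =
        monicOf Fq i c ^ (q ^ (r + 1) - 1) := by
      have hs : ∀ s, (monicOf Fq i c ^ q ^ s) ^ (q - 1) =
          monicOf Fq i c ^ ((q - 1) * q ^ s) := by
        intro s; rw [← pow_mul, mul_comm]
      simp_rw [hs]
      rw [Finset.prod_pow_eq_pow_sum, geom_aux q (r + 1) (by omega)]
    rw [hP_def, map_mul, e1, map_prod]
    simp_rw [map_pow, e2, ← map_pow]
    rw [← map_prod, e3, mul_comm]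
  -- total degree bound
  have hdeg1 : ∀ (b : Polynomial (Polynomial Fq)),
      (MvPolynomial.C b : MvPolynomial (Fin i) (Polynomial (Polynomial Fq))).totalDegree ≤ 1 :=
    fun b => le_of_eq_of_le (MvPolynomial.totalDegree_C _) (by omega)
  have hsum1 : ∀ (f : Fin i → Polynomial (Polynomial Fq)),
      (∑ j : Fin i, MvPolynomial.X j * MvPolynomial.C (f j)).totalDegree ≤ 1 := by
    intro f
    refine le_trans (MvPolynomial.totalDegree_finset_sum _ _) (Finset.sup_le fun j _ => ?_)
    refine le_trans (MvPolynomial.totalDegree_mul _ _) ?_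
    rw [MvPolynomial.totalDegree_X, MvPolynomial.totalDegree_C]
  have hat : at_mv.totalDegree ≤ 1 :=
    le_trans (MvPolynomial.totalDegree_add _ _) (max_le (hdeg1 _) (hsum1 _))
  have hav : ∀ s, (av s).totalDegree ≤ 1 := fun s =>
    le_trans (MvPolynomial.totalDegree_add _ _) (max_le (hdeg1 _) (hsum1 _))
  have hP : P.totalDegree < i * (q - 1) := by
    refine lt_of_le_of_lt ?_ h
    refine le_trans (MvPolynomial.totalDegree_mul _ _) ?_
    have hprod : (∏ s ∈ Finset.range (r + 1), av s ^ (q - 1)).totalDegree ≤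
        (r + 1) * (q - 1) := by
      refine le_trans (MvPolynomial.totalDegree_finset_prod _ _) ?_
      calc ∑ s ∈ Finset.range (r + 1), (av s ^ (q - 1)).totalDegree
          ≤ ∑ _s ∈ Finset.range (r + 1), (q - 1) := by
            refine Finset.sum_le_sum fun s _ => ?_
            refine le_trans (MvPolynomial.totalDegree_pow _ _) ?_
            calc (q - 1) * (av s).totalDegree ≤ (q - 1) * 1 :=
                  Nat.mul_le_mul_left _ (hav s)
              _ = q - 1 := by ring
        _ = (r + 1) * (q - 1) := by simp [Finset.sum_const, mul_comm]
    omega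
  calc ∑ c : Fin i → Fq,
        Polynomial.C (monicOf Fq i c ^ (q ^ (r + 1) - 1)) *
          (monicOf Fq i c).map (Polynomial.C : Fq →+* Polynomial Fq)
      = ∑ c : Fin i → Fq,
          MvPolynomial.eval (fun j => algebraMap Fq (Polynomial (Polynomial Fq)) (c j)) P :=
        Finset.sum_congr rfl fun c _ => (heval c).symm
    _ = 0 := aux_sum_eval Fq (Polynomial (Polynomial Fq)) i P hP
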